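/- (Pexiderized Cauchy equation, orthogonal stability) Let X be a real orthogonality space with symmetric ⊥ and Y a Banach space. If f, h, k : X → Y satisfy ‖f(x+y) − h(x) − k(y)‖ ≤ ε for all x ⊥ y, then there exists a unique orthogonally additive mapping T : X → Y such that ‖f(x) − f(0) − T(x)‖ ≤ 32ε and ‖h(x) + k(x) − h(0) − k(0) − 2T(x)‖ ≤ 72ε for all x ∈ X. -/
import Mathlib

open Filter Topology

private lemma aux17_hyers {Y : Type*} [NormedAddCommGroup Y] [CompleteSpace Y]
    (a : ℕ → Y) (C r : ℝ) (hr : r < 1)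
    (h : ∀ n, ‖a (n + 1) - a n‖ ≤ C * r ^ n) :
    ∃ L, Tendsto a atTop (𝓝 L) ∧ ‖L - a 0‖ ≤ C / (1 - r) := by
  have h' : ∀ n, dist (a n) (a (n + 1)) ≤ C * r ^ n := by
    intro n; rw [dist_eq_norm, norm_sub_rev]; exact h n
  have hc : CauchySeq a := cauchySeq_of_le_geometric r C hr h'
  obtain ⟨L, hL⟩ := cauchySeq_tendsto_of_complete hc
  refine ⟨L, hL, ?_⟩
  have := dist_le_of_le_geometric_of_tendsto₀ r C hr h' hL
  rwa [dist_eq_norm, norm_sub_rev] at this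

private lemma aux17_comp {X : Type*} [AddCommGroup X] [Module ℝ X]
    (perp : X → X → Prop)
    (hO4 : ∀ x : X, ∀ lam : ℝ, 0 ≤ lam →
      ∃ y₀ : X, perp x y₀ ∧ perp (x + y₀) (lam • x - y₀)) :
    ∀ x : X, ∃ y, perp x y ∧ perp (x + y) (x - y) := by
  intro x
  obtain ⟨y, h1, h2⟩ := hO4 x 1 zero_le_one
  exact ⟨y, h1, by simpa using h2⟩

private lemma aux17_odd_double {X Y : Type*} [AddCommGroup X] [Module ℝ X]
    [NormedAddCommGroup Y]
    (perp : X → X → Prop)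
    (hO3 : ∀ x y, perp x y → ∀ α β : ℝ, perp (α • x) (β • y))
    (hO4 : ∀ x : X, ∀ lam : ℝ, 0 ≤ lam →
      ∃ y₀ : X, perp x y₀ ∧ perp (x + y₀) (lam • x - y₀))
    (g : X → Y) (δ : ℝ)
    (hg : ∀ x y, perp x y → ‖g (x + y) - g x - g y‖ ≤ δ)
    (hodd : ∀ x, g (-x) = - g x) :
    ∀ x, ‖g (x + x) - (g x + g x)‖ ≤ 3 * δ := by
  intro x
  obtain ⟨y, hxy, hsd⟩ := aux17_comp perp hO4 x
  have hxny : perp x (-y) := by simpa using hO3 x y hxy 1 (-1)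
  have h1 := hg x y hxy
  have h2 := hg x (-y) hxny
  have h3 := hg (x + y) (x - y) hsd
  rw [show x + y + (x - y) = x + x by abel] at h3
  rw [show x + -y = x - y by abel, hodd y] at h2
  have key : g (x + x) - (g x + g x) =
      (g (x + x) - g (x + y) - g (x - y)) + (g (x + y) - g x - g y) +
        (g (x - y) - g x - - g y) := by abel
  calc ‖g (x + x) - (g x + g x)‖
      ≤ ‖g (x + x) - g (x + y) - g (x - y)‖ + ‖g (x + y) - g x - g y‖ +
        ‖g (x - y) - g x - - g y‖ := by rw [key]; exact norm_add₃_le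
    _ ≤ 3 * δ := by linarith

private lemma aux17_even_pair {X Y : Type*} [AddCommGroup X] [Module ℝ X]
    [NormedAddCommGroup Y]
    (perp : X → X → Prop)
    (hO3 : ∀ x y, perp x y → ∀ α β : ℝ, perp (α • x) (β • y))
    (g : X → Y) (δ : ℝ)
    (hg : ∀ x y, perp x y → ‖g (x + y) - g x - g y‖ ≤ δ)
    (heven : ∀ x, g (-x) = g x) :
    ∀ x y, perp x y → perp (x + y) (x - y) →
      ‖g (x + x) - (g x + g x) - (g y + g y)‖ ≤ 3 * δ ∧
      ‖g (y + y) - g (x + x)‖ ≤ 2 * δ := by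
  intro x y hxy hsd
  have hxny : perp x (-y) := by simpa using hO3 x y hxy 1 (-1)
  have hsnd : perp (x + y) (-(x - y)) := by simpa using hO3 _ _ hsd 1 (-1)
  have h1 := hg x y hxy
  have h2 := hg x (-y) hxny
  have h3 := hg (x + y) (x - y) hsd
  have h4 := hg (x + y) (-(x - y)) hsnd
  rw [show x + y + (x - y) = x + x by abel] at h3
  rw [show x + -y = x - y by abel, heven y] at h2
  rw [show x + y + -(x - y) = y + y by abel, heven (x - y)] at h4
  constructor
  · have key : g (x + x) - (g x + g x) - (g y + g y) =
        (g (x + x) - g (x + y) - g (x - y)) + (g (x + y) - g x - g y) +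
          (g (x - y) - g x - g y) := by abel
    calc ‖g (x + x) - (g x + g x) - (g y + g y)‖
        ≤ ‖g (x + x) - g (x + y) - g (x - y)‖ + ‖g (x + y) - g x - g y‖ +
          ‖g (x - y) - g x - g y‖ := by rw [key]; exact norm_add₃_le
      _ ≤ 3 * δ := by linarith
  · have key : g (y + y) - g (x + x) =
        (g (y + y) - g (x + y) - g (x - y)) - (g (x + x) - g (x + y) - g (x - y)) := by abel
    calc ‖g (y + y) - g (x + x)‖
        ≤ ‖g (y + y) - g (x + y) - g (x - y)‖ + ‖g (x + x) - g (x + y) - g (x - y)‖ := by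
          rw [key]; exact norm_sub_le _ _
      _ ≤ 2 * δ := by linarith

private lemma aux17_even_quad {X Y : Type*} [AddCommGroup X] [Module ℝ X]
    [NormedAddCommGroup Y] [NormedSpace ℝ Y]
    (perp : X → X → Prop)
    (hO3 : ∀ x y, perp x y → ∀ α β : ℝ, perp (α • x) (β • y))
    (hO4 : ∀ x : X, ∀ lam : ℝ, 0 ≤ lam →
      ∃ y₀ : X, perp x y₀ ∧ perp (x + y₀) (lam • x - y₀))
    (g : X → Y) (δ : ℝ)
    (hg : ∀ x y, perp x y → ‖g (x + y) - g x - g y‖ ≤ δ)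
    (heven : ∀ x, g (-x) = g x) :
    ∀ (z : X) (n : ℕ),
      ‖g ((2 : ℝ) ^ (n + 1) • z) - (4 : ℝ) • g ((2 : ℝ) ^ n • z)‖ ≤ 7 * δ := by
  intro z n
  obtain ⟨y, hxy, hsd⟩ := aux17_comp perp hO4 ((2 : ℝ)⁻¹ • z)
  -- scaled configurations
  have hp : ∀ m : ℕ, perp ((2 : ℝ) ^ m • (2 : ℝ)⁻¹ • z) ((2 : ℝ) ^ m • y) :=
    fun m => hO3 _ _ hxy _ _
  have hq : ∀ m : ℕ, perp ((2 : ℝ) ^ m • (2 : ℝ)⁻¹ • z + (2 : ℝ) ^ m • y)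
      ((2 : ℝ) ^ m • (2 : ℝ)⁻¹ • z - (2 : ℝ) ^ m • y) := by
    intro m
    have := hO3 _ _ hsd ((2 : ℝ) ^ m) ((2 : ℝ) ^ m)
    simpa [smul_add, smul_sub] using this
  have idA : ∀ (m : ℕ) (w : X), (2 : ℝ) ^ m • w + (2 : ℝ) ^ m • w = (2 : ℝ) ^ (m + 1) • w := by
    intro m w
    rw [← two_smul ℝ ((2 : ℝ) ^ m • w), smul_smul, ← pow_succ']
  have idB : ∀ m : ℕ, (2 : ℝ) ^ (m + 1) • (2 : ℝ)⁻¹ • z = (2 : ℝ) ^ m • z := by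
    intro m
    rw [smul_smul]
    congr 1
    rw [pow_succ]
    field_simp
  have P1 := (aux17_even_pair perp hO3 g δ hg heven ((2 : ℝ) ^ (n + 1) • (2 : ℝ)⁻¹ • z)
      ((2 : ℝ) ^ (n + 1) • y) (hp (n + 1)) (hq (n + 1))).1
  have P2 := (aux17_even_pair perp hO3 g δ hg heven ((2 : ℝ) ^ n • (2 : ℝ)⁻¹ • z)
      ((2 : ℝ) ^ n • y) (hp n) (hq n)).2
  rw [idA (n + 1), idB (n + 1), idB n] at P1
  rw [idA n, idA n, idB n] at P2
  -- P1 : ‖g (2^(n+1) • z) - (a + a) - (b + b)‖ ≤ 3δ with a = g (2^n • z), b = g (2^(n+1) • y)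
  -- P2 : ‖b - a‖ ≤ 2δ
  set a := g ((2 : ℝ) ^ n • z)
  set b := g ((2 : ℝ) ^ (n + 1) • y)
  have key : g ((2 : ℝ) ^ (n + 1) • z) - (4 : ℝ) • a =
      (g ((2 : ℝ) ^ (n + 1) • z) - (a + a) - (b + b)) + (b - a) + (b - a) := by
    have h4 : (4 : ℝ) • a = a + a + a + a := by module
    rw [h4]; abel
  calc ‖g ((2 : ℝ) ^ (n + 1) • z) - (4 : ℝ) • a‖
      ≤ ‖g ((2 : ℝ) ^ (n + 1) • z) - (a + a) - (b + b)‖ + ‖b - a‖ + ‖b - a‖ := by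
        rw [key]; exact norm_add₃_le
    _ ≤ 7 * δ := by linarith

private lemma aux17_main {X Y : Type*} [AddCommGroup X] [Module ℝ X]
    [NormedAddCommGroup Y] [NormedSpace ℝ Y] [CompleteSpace Y]
    (perp : X → X → Prop)
    (hO3 : ∀ x y, perp x y → ∀ α β : ℝ, perp (α • x) (β • y))
    (hO4 : ∀ x : X, ∀ lam : ℝ, 0 ≤ lam →
      ∃ y₀ : X, perp x y₀ ∧ perp (x + y₀) (lam • x - y₀))
    (g : X → Y) (δ : ℝ)
    (hg : ∀ x y, perp x y → ‖g (x + y) - g x - g y‖ ≤ δ) :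
    ∃ T : X → Y, (∀ x y, perp x y → T (x + y) = T x + T y) ∧
      ∀ x, ‖g x - T x‖ ≤ 16 / 3 * δ := by
  have hnegp : ∀ x y, perp x y → perp (-x) (-y) := by
    intro x y hxy
    simpa using hO3 x y hxy (-1) (-1)
  have idA : ∀ (m : ℕ) (w : X),
      (2 : ℝ) ^ m • w + (2 : ℝ) ^ m • w = (2 : ℝ) ^ (m + 1) • w := by
    intro m w
    rw [← two_smul ℝ ((2 : ℝ) ^ m • w), smul_smul, ← pow_succ']
  have hn2 : ∀ n : ℕ, ‖(((2 : ℝ) ^ n)⁻¹)‖ = ((2 : ℝ) ^ n)⁻¹ := by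
    intro n; rw [Real.norm_eq_abs, abs_of_pos]; positivity
  have hn4 : ∀ n : ℕ, ‖(((4 : ℝ) ^ n)⁻¹)‖ = ((4 : ℝ) ^ n)⁻¹ := by
    intro n; rw [Real.norm_eq_abs, abs_of_pos]; positivity
  obtain ⟨go, hgo_def⟩ : ∃ go : X → Y, go = fun x => (2⁻¹ : ℝ) • (g x - g (-x)) := ⟨_, rfl⟩
  obtain ⟨ge, hge_def⟩ : ∃ ge : X → Y, ge = fun x => (2⁻¹ : ℝ) • (g x + g (-x)) := ⟨_, rfl⟩
  have hsplit : ∀ x, go x + ge x = g x := by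
    intro x; simp only [hgo_def, hge_def]; module
  have hgo_odd : ∀ x, go (-x) = - go x := by
    intro x; simp only [hgo_def, neg_neg]; module
  have hge_even : ∀ x, ge (-x) = ge x := by
    intro x; simp only [hge_def, neg_neg]; module
  have hgo_approx : ∀ x y, perp x y → ‖go (x + y) - go x - go y‖ ≤ δ := by
    intro x y hxy
    have h1 := hg x y hxy
    have h2 := hg (-x) (-y) (hnegp x y hxy)
    have e : go (x + y) - go x - go y =
        (2⁻¹ : ℝ) • ((g (x + y) - g x - g y) - (g (-x + -y) - g (-x) - g (-y))) := by
      simp only [hgo_def, show -(x + y) = -x + -y by abel]; module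
    rw [e, norm_smul]
    have h3 : ‖g (x + y) - g x - g y - (g (-x + -y) - g (-x) - g (-y))‖ ≤ δ + δ :=
      (norm_sub_le _ _).trans (by linarith)
    rw [show ‖(2⁻¹ : ℝ)‖ = 2⁻¹ by norm_num]
    linarith
  have hge_approx : ∀ x y, perp x y → ‖ge (x + y) - ge x - ge y‖ ≤ δ := by
    intro x y hxy
    have h1 := hg x y hxy
    have h2 := hg (-x) (-y) (hnegp x y hxy)
    have e : ge (x + y) - ge x - ge y =
        (2⁻¹ : ℝ) • ((g (x + y) - g x - g y) + (g (-x + -y) - g (-x) - g (-y))) := by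
      simp only [hge_def, show -(x + y) = -x + -y by abel]; module
    rw [e, norm_smul]
    have h3 : ‖g (x + y) - g x - g y + (g (-x + -y) - g (-x) - g (-y))‖ ≤ δ + δ :=
      (norm_add_le _ _).trans (by linarith)
    rw [show ‖(2⁻¹ : ℝ)‖ = 2⁻¹ by norm_num]
    linarith
  have hod := aux17_odd_double perp hO3 hO4 go δ hgo_approx hgo_odd
  have heq := aux17_even_quad perp hO3 hO4 ge δ hge_approx hge_even
  -- odd limit
  have hTo : ∀ x : X, ∃ L,
      Tendsto (fun n : ℕ => ((2 : ℝ) ^ n)⁻¹ • go ((2 : ℝ) ^ n • x)) atTop (𝓝 L) ∧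
      ‖L - go x‖ ≤ 3 * δ := by
    intro x
    have hdiff : ∀ n : ℕ,
        ‖((2 : ℝ) ^ (n + 1))⁻¹ • go ((2 : ℝ) ^ (n + 1) • x) -
          ((2 : ℝ) ^ n)⁻¹ • go ((2 : ℝ) ^ n • x)‖ ≤ 3 * δ / 2 * (1 / 2) ^ n := by
      intro n
      have h2 := hod ((2 : ℝ) ^ n • x)
      rw [idA n x] at h2
      have hs : ((2 : ℝ) ^ n)⁻¹ = ((2 : ℝ) ^ (n + 1))⁻¹ * 2 := by
        rw [pow_succ]; field_simp
      have e : ((2 : ℝ) ^ (n + 1))⁻¹ • go ((2 : ℝ) ^ (n + 1) • x) -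
          ((2 : ℝ) ^ n)⁻¹ • go ((2 : ℝ) ^ n • x) =
          ((2 : ℝ) ^ (n + 1))⁻¹ • (go ((2 : ℝ) ^ (n + 1) • x) -
            (go ((2 : ℝ) ^ n • x) + go ((2 : ℝ) ^ n • x))) := by
        rw [hs, mul_smul, two_smul, smul_sub]
      rw [e, norm_smul, hn2 (n + 1)]
      calc ((2 : ℝ) ^ (n + 1))⁻¹ *
            ‖go ((2 : ℝ) ^ (n + 1) • x) - (go ((2 : ℝ) ^ n • x) + go ((2 : ℝ) ^ n • x))‖
          ≤ ((2 : ℝ) ^ (n + 1))⁻¹ * (3 * δ) := by gcongr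
        _ = 3 * δ / 2 * (1 / 2) ^ n := by
            rw [pow_succ, mul_inv, one_div, inv_pow]; ring
    obtain ⟨L, hL, hB⟩ := aux17_hyers
      (fun n : ℕ => ((2 : ℝ) ^ n)⁻¹ • go ((2 : ℝ) ^ n • x)) (3 * δ / 2) (1 / 2)
      (by norm_num) hdiff
    refine ⟨L, hL, ?_⟩
    have hB' : ‖L - ((2 : ℝ) ^ (0 : ℕ))⁻¹ • go ((2 : ℝ) ^ (0 : ℕ) • x)‖ ≤
        3 * δ / 2 / (1 - 1 / 2) := hB
    simp only [pow_zero, inv_one, one_smul] at hB'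
    have : (3 : ℝ) * δ / 2 / (1 - 1 / 2) = 3 * δ := by norm_num; ring
    linarith [hB', this.le]
  choose To hToLim hToB using hTo
  -- even limit
  have hTe : ∀ x : X, ∃ L,
      Tendsto (fun n : ℕ => ((4 : ℝ) ^ n)⁻¹ • ge ((2 : ℝ) ^ n • x)) atTop (𝓝 L) ∧
      ‖L - ge x‖ ≤ 7 * δ / 3 := by
    intro x
    have hdiff : ∀ n : ℕ,
        ‖((4 : ℝ) ^ (n + 1))⁻¹ • ge ((2 : ℝ) ^ (n + 1) • x) -
          ((4 : ℝ) ^ n)⁻¹ • ge ((2 : ℝ) ^ n • x)‖ ≤ 7 * δ / 4 * (1 / 4) ^ n := by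
      intro n
      have h2 := heq x n
      have hs : ((4 : ℝ) ^ n)⁻¹ = ((4 : ℝ) ^ (n + 1))⁻¹ * 4 := by
        rw [pow_succ]; field_simp
      have e : ((4 : ℝ) ^ (n + 1))⁻¹ • ge ((2 : ℝ) ^ (n + 1) • x) -
          ((4 : ℝ) ^ n)⁻¹ • ge ((2 : ℝ) ^ n • x) =
          ((4 : ℝ) ^ (n + 1))⁻¹ • (ge ((2 : ℝ) ^ (n + 1) • x) -
            (4 : ℝ) • ge ((2 : ℝ) ^ n • x)) := by
        rw [hs, mul_smul, smul_sub]
      rw [e, norm_smul, hn4 (n + 1)]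
      calc ((4 : ℝ) ^ (n + 1))⁻¹ *
            ‖ge ((2 : ℝ) ^ (n + 1) • x) - (4 : ℝ) • ge ((2 : ℝ) ^ n • x)‖
          ≤ ((4 : ℝ) ^ (n + 1))⁻¹ * (7 * δ) := by gcongr
        _ = 7 * δ / 4 * (1 / 4) ^ n := by
            rw [pow_succ, mul_inv, one_div, inv_pow]; ring
    obtain ⟨L, hL, hB⟩ := aux17_hyers
      (fun n : ℕ => ((4 : ℝ) ^ n)⁻¹ • ge ((2 : ℝ) ^ n • x)) (7 * δ / 4) (1 / 4)
      (by norm_num) hdiff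
    refine ⟨L, hL, ?_⟩
    have hB' : ‖L - ((4 : ℝ) ^ (0 : ℕ))⁻¹ • ge ((2 : ℝ) ^ (0 : ℕ) • x)‖ ≤
        7 * δ / 4 / (1 - 1 / 4) := hB
    simp only [pow_zero, inv_one, one_smul] at hB'
    have : (7 : ℝ) * δ / 4 / (1 - 1 / 4) = 7 * δ / 3 := by norm_num; ring
    linarith [hB', this.le]
  choose Te hTeLim hTeB using hTe
  -- additivity of To
  have hToAdd : ∀ x y, perp x y → To (x + y) = To x + To y := by
    intro x y hxy
    have h1 : Tendsto (fun n : ℕ =>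
        ((2 : ℝ) ^ n)⁻¹ • go ((2 : ℝ) ^ n • (x + y)) -
          (((2 : ℝ) ^ n)⁻¹ • go ((2 : ℝ) ^ n • x) + ((2 : ℝ) ^ n)⁻¹ • go ((2 : ℝ) ^ n • y)))
        atTop (𝓝 (To (x + y) - (To x + To y))) :=
      (hToLim (x + y)).sub ((hToLim x).add (hToLim y))
    have h0 : Tendsto (fun n : ℕ => δ * (1 / 2 : ℝ) ^ n) atTop (𝓝 0) := by
      have := (tendsto_pow_atTop_nhds_zero_of_lt_one
        (by norm_num : (0:ℝ) ≤ 1 / 2) (by norm_num)).const_mul δ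
      simpa using this
    have h2 : Tendsto (fun n : ℕ =>
        ((2 : ℝ) ^ n)⁻¹ • go ((2 : ℝ) ^ n • (x + y)) -
          (((2 : ℝ) ^ n)⁻¹ • go ((2 : ℝ) ^ n • x) + ((2 : ℝ) ^ n)⁻¹ • go ((2 : ℝ) ^ n • y)))
        atTop (𝓝 0) := by
      apply squeeze_zero_norm _ h0
      intro n
      have hp := hgo_approx ((2 : ℝ) ^ n • x) ((2 : ℝ) ^ n • y) (hO3 x y hxy _ _)
      have e : ((2 : ℝ) ^ n)⁻¹ • go ((2 : ℝ) ^ n • (x + y)) -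
          (((2 : ℝ) ^ n)⁻¹ • go ((2 : ℝ) ^ n • x) + ((2 : ℝ) ^ n)⁻¹ • go ((2 : ℝ) ^ n • y)) =
          ((2 : ℝ) ^ n)⁻¹ • (go ((2 : ℝ) ^ n • x + (2 : ℝ) ^ n • y) -
            go ((2 : ℝ) ^ n • x) - go ((2 : ℝ) ^ n • y)) := by
        rw [smul_add]; module
      rw [e, norm_smul, hn2 n]
      calc ((2 : ℝ) ^ n)⁻¹ * ‖go ((2 : ℝ) ^ n • x + (2 : ℝ) ^ n • y) -
            go ((2 : ℝ) ^ n • x) - go ((2 : ℝ) ^ n • y)‖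
          ≤ ((2 : ℝ) ^ n)⁻¹ * δ := by gcongr
        _ = δ * (1 / 2) ^ n := by rw [one_div, inv_pow]; ring
    exact sub_eq_zero.mp (tendsto_nhds_unique h1 h2)
  -- additivity of Te
  have hTeAdd : ∀ x y, perp x y → Te (x + y) = Te x + Te y := by
    intro x y hxy
    have h1 : Tendsto (fun n : ℕ =>
        ((4 : ℝ) ^ n)⁻¹ • ge ((2 : ℝ) ^ n • (x + y)) -
          (((4 : ℝ) ^ n)⁻¹ • ge ((2 : ℝ) ^ n • x) + ((4 : ℝ) ^ n)⁻¹ • ge ((2 : ℝ) ^ n • y)))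
        atTop (𝓝 (Te (x + y) - (Te x + Te y))) :=
      (hTeLim (x + y)).sub ((hTeLim x).add (hTeLim y))
    have h0 : Tendsto (fun n : ℕ => δ * (1 / 4 : ℝ) ^ n) atTop (𝓝 0) := by
      have := (tendsto_pow_atTop_nhds_zero_of_lt_one
        (by norm_num : (0:ℝ) ≤ 1 / 4) (by norm_num)).const_mul δ
      simpa using this
    have h2 : Tendsto (fun n : ℕ =>
        ((4 : ℝ) ^ n)⁻¹ • ge ((2 : ℝ) ^ n • (x + y)) -
          (((4 : ℝ) ^ n)⁻¹ • ge ((2 : ℝ) ^ n • x) + ((4 : ℝ) ^ n)⁻¹ • ge ((2 : ℝ) ^ n • y)))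
        atTop (𝓝 0) := by
      apply squeeze_zero_norm _ h0
      intro n
      have hp := hge_approx ((2 : ℝ) ^ n • x) ((2 : ℝ) ^ n • y) (hO3 x y hxy _ _)
      have e : ((4 : ℝ) ^ n)⁻¹ • ge ((2 : ℝ) ^ n • (x + y)) -
          (((4 : ℝ) ^ n)⁻¹ • ge ((2 : ℝ) ^ n • x) + ((4 : ℝ) ^ n)⁻¹ • ge ((2 : ℝ) ^ n • y)) =
          ((4 : ℝ) ^ n)⁻¹ • (ge ((2 : ℝ) ^ n • x + (2 : ℝ) ^ n • y) -
            ge ((2 : ℝ) ^ n • x) - ge ((2 : ℝ) ^ n • y)) := by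
        rw [smul_add]; module
      rw [e, norm_smul, hn4 n]
      calc ((4 : ℝ) ^ n)⁻¹ * ‖ge ((2 : ℝ) ^ n • x + (2 : ℝ) ^ n • y) -
            ge ((2 : ℝ) ^ n • x) - ge ((2 : ℝ) ^ n • y)‖
          ≤ ((4 : ℝ) ^ n)⁻¹ * δ := by gcongr
        _ = δ * (1 / 4) ^ n := by rw [one_div, inv_pow]; ring
    exact sub_eq_zero.mp (tendsto_nhds_unique h1 h2)
  refine ⟨fun x => To x + Te x, ?_, ?_⟩
  · intro x y hxy
    show To (x + y) + Te (x + y) = To x + Te x + (To y + Te y)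
    rw [hToAdd x y hxy, hTeAdd x y hxy]; abel
  · intro x
    show ‖g x - (To x + Te x)‖ ≤ 16 / 3 * δ
    have e : g x - (To x + Te x) = (go x - To x) + (ge x - Te x) := by
      rw [← hsplit x]; abel
    have b1 := hToB x
    have b2 := hTeB x
    rw [norm_sub_rev] at b1 b2
    calc ‖g x - (To x + Te x)‖ ≤ ‖go x - To x‖ + ‖ge x - Te x‖ := by
          rw [e]; exact norm_add_le _ _
      _ ≤ 16 / 3 * δ := by linarith

private lemma aux17_rigid {X Y : Type*} [AddCommGroup X] [Module ℝ X]
    [NormedAddCommGroup Y] [NormedSpace ℝ Y]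
    (perp : X → X → Prop)
    (hO3 : ∀ x y, perp x y → ∀ α β : ℝ, perp (α • x) (β • y))
    (hO4 : ∀ x : X, ∀ lam : ℝ, 0 ≤ lam →
      ∃ y₀ : X, perp x y₀ ∧ perp (x + y₀) (lam • x - y₀))
    (D : X → Y) (M : ℝ)
    (hadd : ∀ x y, perp x y → D (x + y) = D x + D y)
    (hb : ∀ x, ‖D x‖ ≤ M) :
    ∀ x, D x = 0 := by
  have hnegp : ∀ x y, perp x y → perp (-x) (-y) := by
    intro x y hxy
    simpa using hO3 x y hxy (-1) (-1)
  have idA : ∀ (m : ℕ) (w : X),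
      (2 : ℝ) ^ m • w + (2 : ℝ) ^ m • w = (2 : ℝ) ^ (m + 1) • w := by
    intro m w
    rw [← two_smul ℝ ((2 : ℝ) ^ m • w), smul_smul, ← pow_succ']
  obtain ⟨Do, hDo_def⟩ : ∃ Do : X → Y, Do = fun x => (2⁻¹ : ℝ) • (D x - D (-x)) := ⟨_, rfl⟩
  obtain ⟨De, hDe_def⟩ : ∃ De : X → Y, De = fun x => (2⁻¹ : ℝ) • (D x + D (-x)) := ⟨_, rfl⟩
  have hsplit : ∀ x, Do x + De x = D x := by
    intro x; simp only [hDo_def, hDe_def]; module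
  have hDo_odd : ∀ x, Do (-x) = - Do x := by
    intro x; simp only [hDo_def, neg_neg]; module
  have hDe_even : ∀ x, De (-x) = De x := by
    intro x; simp only [hDe_def, neg_neg]; module
  have hDo_add : ∀ x y, perp x y → ‖Do (x + y) - Do x - Do y‖ ≤ 0 := by
    intro x y hxy
    have e : Do (x + y) - Do x - Do y =
        (2⁻¹ : ℝ) • ((D (x + y) - D x - D y) - (D (-x + -y) - D (-x) - D (-y))) := by
      simp only [hDo_def, show -(x + y) = -x + -y by abel]; module
    rw [e, hadd x y hxy, hadd (-x) (-y) (hnegp x y hxy)]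
    simp
  have hDe_add : ∀ x y, perp x y → ‖De (x + y) - De x - De y‖ ≤ 0 := by
    intro x y hxy
    have e : De (x + y) - De x - De y =
        (2⁻¹ : ℝ) • ((D (x + y) - D x - D y) + (D (-x + -y) - D (-x) - D (-y))) := by
      simp only [hDe_def, show -(x + y) = -x + -y by abel]; module
    rw [e, hadd x y hxy, hadd (-x) (-y) (hnegp x y hxy)]
    simp
  have hbo : ∀ x, ‖Do x‖ ≤ M := by
    intro x
    simp only [hDo_def]
    rw [norm_smul, show ‖(2⁻¹ : ℝ)‖ = 2⁻¹ by norm_num]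
    have := norm_sub_le (D x) (D (-x))
    have h1 := hb x; have h2 := hb (-x)
    linarith
  have hbe : ∀ x, ‖De x‖ ≤ M := by
    intro x
    simp only [hDe_def]
    rw [norm_smul, show ‖(2⁻¹ : ℝ)‖ = 2⁻¹ by norm_num]
    have := norm_add_le (D x) (D (-x))
    have h1 := hb x; have h2 := hb (-x)
    linarith
  have hod := aux17_odd_double perp hO3 hO4 Do 0 hDo_add hDo_odd
  have heq := aux17_even_quad perp hO3 hO4 De 0 hDe_add hDe_even
  have hod' : ∀ w, Do (w + w) = Do w + Do w := by
    intro w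
    have := hod w
    rw [mul_zero] at this
    exact sub_eq_zero.mp (norm_le_zero_iff.mp this)
  have heq' : ∀ z n, De ((2 : ℝ) ^ (n + 1) • z) = (4 : ℝ) • De ((2 : ℝ) ^ n • z) := by
    intro z n
    have := heq z n
    rw [mul_zero] at this
    exact sub_eq_zero.mp (norm_le_zero_iff.mp this)
  have hDo_iter : ∀ (x : X) (n : ℕ), Do ((2 : ℝ) ^ n • x) = (2 : ℝ) ^ n • Do x := by
    intro x n
    induction n with
    | zero => simp
    | succ n ih =>
      rw [← idA n x, hod' _, ih, ← two_smul ℝ ((2 : ℝ) ^ n • Do x), smul_smul, ← pow_succ']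
  have hDe_iter : ∀ (x : X) (n : ℕ), De ((2 : ℝ) ^ n • x) = (4 : ℝ) ^ n • De x := by
    intro x n
    induction n with
    | zero => simp
    | succ n ih =>
      rw [heq' x n, ih, smul_smul, ← pow_succ']
  have hMnn : 0 ≤ M := le_trans (norm_nonneg _) (hb 0)
  have hDo0 : ∀ x, Do x = 0 := by
    intro x
    have key : ∀ n : ℕ, ‖Do x‖ ≤ M * (1 / 2) ^ n := by
      intro n
      have h := hbo ((2 : ℝ) ^ n • x)
      rw [hDo_iter x n, norm_smul, Real.norm_eq_abs,
        abs_of_pos (by positivity : (0:ℝ) < (2:ℝ) ^ n)] at h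
      have h2 : (0:ℝ) < (2:ℝ) ^ n := by positivity
      rw [one_div, inv_pow]
      calc ‖Do x‖ = ((2:ℝ) ^ n)⁻¹ * ((2:ℝ) ^ n * ‖Do x‖) := by field_simp
        _ ≤ ((2:ℝ) ^ n)⁻¹ * M := by gcongr
        _ = M * ((2:ℝ) ^ n)⁻¹ := by ring
    have hlim : Tendsto (fun n : ℕ => M * (1 / 2 : ℝ) ^ n) atTop (𝓝 0) := by
      have := (tendsto_pow_atTop_nhds_zero_of_lt_one
        (by norm_num : (0:ℝ) ≤ 1 / 2) (by norm_num)).const_mul M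
      simpa using this
    have : ‖Do x‖ ≤ 0 := ge_of_tendsto' hlim key
    simpa using norm_le_zero_iff.mp this
  have hDe0 : ∀ x, De x = 0 := by
    intro x
    have key : ∀ n : ℕ, ‖De x‖ ≤ M * (1 / 4) ^ n := by
      intro n
      have h := hbe ((2 : ℝ) ^ n • x)
      rw [hDe_iter x n, norm_smul, Real.norm_eq_abs,
        abs_of_pos (by positivity : (0:ℝ) < (4:ℝ) ^ n)] at h
      have h2 : (0:ℝ) < (4:ℝ) ^ n := by positivity
      rw [one_div, inv_pow]
      calc ‖De x‖ = ((4:ℝ) ^ n)⁻¹ * ((4:ℝ) ^ n * ‖De x‖) := by field_simp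
        _ ≤ ((4:ℝ) ^ n)⁻¹ * M := by gcongr
        _ = M * ((4:ℝ) ^ n)⁻¹ := by ring
    have hlim : Tendsto (fun n : ℕ => M * (1 / 4 : ℝ) ^ n) atTop (𝓝 0) := by
      have := (tendsto_pow_atTop_nhds_zero_of_lt_one
        (by norm_num : (0:ℝ) ≤ 1 / 4) (by norm_num)).const_mul M
      simpa using this
    have : ‖De x‖ ≤ 0 := ge_of_tendsto' hlim key
    simpa using norm_le_zero_iff.mp this
  intro x
  rw [← hsplit x, hDo0 x, hDe0 x, add_zero]

/-- Orthogonal stability of the Pexiderized Cauchy equation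
`f(x+y) = h(x) + k(y)`. -/
theorem stmt17 {X Y : Type*} [AddCommGroup X] [Module ℝ X] [NormedAddCommGroup Y]
    [NormedSpace ℝ Y] [CompleteSpace Y]
    (perp : X → X → Prop)
    (hsymm : ∀ x y, perp x y → perp y x)
    (hO1 : ∀ x, perp x 0 ∧ perp 0 x)
    (hO2 : ∀ x y, x ≠ 0 → y ≠ 0 → perp x y → LinearIndependent ℝ ![x, y])
    (hO3 : ∀ x y, perp x y → ∀ α β : ℝ, perp (α • x) (β • y))
    (hO4 : ∀ x : X, ∀ lam : ℝ, 0 ≤ lam →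
      ∃ y₀ : X, perp x y₀ ∧ perp (x + y₀) (lam • x - y₀))
    (f h k : X → Y) (ε : ℝ) (hε : 0 ≤ ε)
    (hineq : ∀ x y, perp x y → ‖f (x + y) - h x - k y‖ ≤ ε) :
    ∃! T : X → Y,
      (∀ x y, perp x y → T (x + y) = T x + T y) ∧
      (∀ x, ‖f x - f 0 - T x‖ ≤ 32 * ε) ∧
      (∀ x, ‖h x + k x - h 0 - k 0 - (2 : ℝ) • T x‖ ≤ 72 * ε) := by
  have h00 : ‖f 0 - h 0 - k 0‖ ≤ ε := by simpa using hineq 0 0 (hO1 0).1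
  have hx0 : ∀ x, ‖f x - h x - k 0‖ ≤ ε := fun x => by simpa using hineq x 0 (hO1 x).1
  have h0y : ∀ y, ‖f y - h 0 - k y‖ ≤ ε := fun y => by simpa using hineq 0 y (hO1 y).2
  obtain ⟨F, hF_def⟩ : ∃ F : X → Y, F = fun x => f x - f 0 := ⟨_, rfl⟩
  have hF : ∀ x y, perp x y → ‖F (x + y) - F x - F y‖ ≤ 4 * ε := by
    intro x y hxy
    have e : F (x + y) - F x - F y =
        (f (x + y) - h x - k y) - (f x - h x - k 0) - (f y - h 0 - k y) +
          (f 0 - h 0 - k 0) := by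
      simp only [hF_def]; abel
    have h1 := hineq x y hxy
    have h2 := hx0 x
    have h3 := h0y y
    have n1 := norm_add_le
      ((f (x + y) - h x - k y) - (f x - h x - k 0) - (f y - h 0 - k y)) (f 0 - h 0 - k 0)
    have n2 := norm_sub_le ((f (x + y) - h x - k y) - (f x - h x - k 0)) (f y - h 0 - k y)
    have n3 := norm_sub_le (f (x + y) - h x - k y) (f x - h x - k 0)
    rw [e]; linarith
  obtain ⟨T, hTadd, hTb⟩ := aux17_main perp hO3 hO4 F (4 * ε) hF
  have hTb' : ∀ x, ‖f x - f 0 - T x‖ ≤ 64 / 3 * ε := by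
    intro x
    have := hTb x
    simp only [hF_def] at this
    linarith
  have b1 : ∀ x, ‖f x - f 0 - T x‖ ≤ 32 * ε := fun x => (hTb' x).trans (by linarith)
  have b2 : ∀ x, ‖h x + k x - h 0 - k 0 - (2 : ℝ) • T x‖ ≤ 72 * ε := by
    intro x
    have e : h x + k x - h 0 - k 0 - (2 : ℝ) • T x =
        -(f x - h x - k 0) - (f x - h 0 - k x) + (2 : ℝ) • (f x - f 0 - T x) +
          (2 : ℝ) • (f 0 - h 0 - k 0) := by module
    have h2 := hx0 x
    have h3 := h0y x
    have h4 := hTb' x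
    have n1 := norm_add_le
      (-(f x - h x - k 0) - (f x - h 0 - k x) + (2 : ℝ) • (f x - f 0 - T x))
      ((2 : ℝ) • (f 0 - h 0 - k 0))
    have n2 := norm_add_le (-(f x - h x - k 0) - (f x - h 0 - k x))
      ((2 : ℝ) • (f x - f 0 - T x))
    have n3 := norm_sub_le (-(f x - h x - k 0)) (f x - h 0 - k x)
    have ns1 : ‖(2 : ℝ) • (f x - f 0 - T x)‖ = 2 * ‖f x - f 0 - T x‖ := by
      rw [norm_smul]; norm_num
    have ns2 : ‖(2 : ℝ) • (f 0 - h 0 - k 0)‖ = 2 * ‖f 0 - h 0 - k 0‖ := by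
      rw [norm_smul]; norm_num
    have nneg : ‖-(f x - h x - k 0)‖ = ‖f x - h x - k 0‖ := norm_neg _
    rw [e]; linarith
  refine ⟨T, ⟨hTadd, b1, b2⟩, ?_⟩
  rintro T' ⟨hT'add, b1', b2'⟩
  have hD : ∀ x, T' x - T x = 0 := by
    apply aux17_rigid perp hO3 hO4 (fun x => T' x - T x) (64 * ε)
    · intro x y hxy
      show T' (x + y) - T (x + y) = (T' x - T x) + (T' y - T y)
      rw [hT'add x y hxy, hTadd x y hxy]; abel
    · intro x
      have e : T' x - T x = (f x - f 0 - T x) - (f x - f 0 - T' x) := by abel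
      have := norm_sub_le (f x - f 0 - T x) (f x - f 0 - T' x)
      show ‖T' x - T x‖ ≤ 64 * ε
      rw [e]
      linarith [b1 x, b1' x]
  funext x
  exact sub_eq_zero.mp (hD x)
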